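/- If the allocation set is swappable and the mixed allocation p* is Pareto Efficient, then the envy graph of p* is acyclic, where the envy graph has a directed edge from i to i' whenever ∑_j p*_j u_i(A^(j)_i) < ∑_j p*_j u_i(A^(j)_{i'}). -/

import Mathlib

/-- Compositions of swaps: any permutation of bundles is realized by some allocation. -/
lemma perm_alloc {n m k : ℕ} (A : Fin k → Fin n → Finset (Fin m))
    (hswap : ∀ j : Fin k, ∀ g h : Fin n, ∃ l : Fin k,
      (∀ i, i ≠ g → i ≠ h → A l i = A j i) ∧ A l g = A j h ∧ A l h = A j g)
    (σ : Equiv.Perm (Fin n)) (j : Fin k) : ∃ l : Fin k, ∀ i, A l i = A j (σ i) := by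
  refine Equiv.Perm.swap_induction_on' σ ⟨j, fun i => rfl⟩ ?_
  intro f g h hgh ih
  · obtain ⟨l, hl⟩ := ih
    obtain ⟨l', hl1, hl2, hl3⟩ := hswap l g h
    refine ⟨l', fun i => ?_⟩
    by_cases hig : i = g
    · subst hig
      simp only [Equiv.Perm.mul_apply, Equiv.swap_apply_left]
      rw [hl2, hl]
    by_cases hih : i = h
    · subst hih
      simp only [Equiv.Perm.mul_apply, Equiv.swap_apply_right]
      rw [hl3, hl]
    · simp only [Equiv.Perm.mul_apply, Equiv.swap_apply_of_ne_of_ne hig hih]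
      rw [hl1 i hig hih, hl]

/-- If the allocation set is swappable and the mixed allocation p* is
Pareto Efficient, then the envy graph of p* is acyclic. -/
theorem stmt4 {n m k : ℕ} (A : Fin k → Fin n → Finset (Fin m))
    (u : Fin n → Finset (Fin m) → ℝ)
    (hswap : ∀ j : Fin k, ∀ g h : Fin n, ∃ l : Fin k,
      (∀ i, i ≠ g → i ≠ h → A l i = A j i) ∧ A l g = A j h ∧ A l h = A j g)
    (p : Fin k → ℝ) (hp0 : ∀ j, 0 ≤ p j) (hp1 : ∑ j, p j = 1)
    (hPE : ¬ ∃ q : Fin k → ℝ, (∀ j, 0 ≤ q j) ∧ (∑ j, q j = 1) ∧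
      (∀ i, ∑ j, p j * u i (A j i) ≤ ∑ j, q j * u i (A j i)) ∧
      (∃ i, ∑ j, p j * u i (A j i) < ∑ j, q j * u i (A j i))) :
    ∀ i : Fin n, ¬ Relation.TransGen
      (fun a b : Fin n => ∑ j, p j * u a (A j a) < ∑ j, p j * u a (A j b)) i i := by
  set r : Fin n → Fin n → Prop :=
    fun a b : Fin n => ∑ j, p j * u a (A j a) < ∑ j, p j * u a (A j b) with hr
  intro i0 hcyc
  -- P a: a has an out-edge leading back to itself
  set P : Fin n → Prop := fun a => ∃ b, r a b ∧ Relation.ReflTransGen r b a with hP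
  have hPi0 : P i0 := Relation.TransGen.head'_iff.mp hcyc
  classical
  -- successor function
  set f : Fin n → Fin n := fun a => if h : P a then h.choose else a with hf
  have hfr : ∀ a, P a → r a (f a) := by
    intro a ha
    simp only [hf, dif_pos ha]
    exact ha.choose_spec.1
  have hfP : ∀ a, P a → P (f a) := by
    intro a ha
    have h1 : Relation.ReflTransGen r (f a) a := by
      simp only [hf, dif_pos ha]; exact ha.choose_spec.2
    have h2 : Relation.TransGen r (f a) (f a) :=
      Relation.TransGen.trans_right h1 (Relation.TransGen.single (hfr a ha))
    exact Relation.TransGen.head'_iff.mp h2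
  have hiterP : ∀ t : ℕ, P (f^[t] i0) := by
    intro t
    induction t with
    | zero => exact hPi0
    | succ t ih => rw [Function.iterate_succ_apply']; exact hfP _ ih
  -- find a periodic point
  obtain ⟨a, b, hab, heq⟩ := Finite.exists_ne_map_eq_of_infinite (fun t : ℕ => f^[t] i0)
  wlog hlt : a < b generalizing a b
  · exact this b a hab.symm heq.symm (by omega)
  set x : Fin n := f^[a] i0 with hx
  have hper : Function.IsPeriodicPt f (b - a) x := by
    show f^[b-a] x = x
    rw [hx, ← Function.iterate_add_apply]
    have : b - a + a = b := by omega
    rw [this]; exact heq.symm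
  have hdpos : 0 < Function.minimalPeriod f x :=
    hper.minimalPeriod_pos (by omega)
  set d : ℕ := Function.minimalPeriod f x with hd
  have hperd : f^[d] x = x := Function.isPeriodicPt_minimalPeriod f x
  have hiterPx : ∀ t : ℕ, P (f^[t] x) := by
    intro t; rw [hx, ← Function.iterate_add_apply]; exact hiterP _
  -- the simple cycle list
  set L : List (Fin n) := (List.range d).map (fun t => f^[t] x) with hL
  have hLlen : L.length = d := by simp [hL]
  have hLget : ∀ (t : ℕ) (ht : t < L.length), L[t] = f^[t] x := by
    intro t ht; simp [hL]
  have hLnodup : L.Nodup := by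
    refine List.Nodup.map_on ?_ List.nodup_range
    intro s hs t ht hst
    exact Function.iterate_injOn_Iio_minimalPeriod
      (by simpa using List.mem_range.mp hs) (by simpa using List.mem_range.mp ht) hst
  have hmemL : ∀ y, y ∈ L ↔ ∃ t, t < d ∧ f^[t] x = y := by
    intro y; simp [hL, List.mem_map, eq_comm]
  set σ : Equiv.Perm (Fin n) := L.formPerm with hσ
  have hσmem : ∀ y ∈ L, σ y = f y := by
    intro y hy
    obtain ⟨t, ht, rfl⟩ := (hmemL y).mp hy
    have htL : t < L.length := by rwa [hLlen]
    have h1 : σ (f^[t] x) = f^[(t+1) % L.length] x := by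
      have h0 := List.formPerm_apply_getElem L hLnodup t htL
      rwa [hLget t htL, hLget _ (Nat.mod_lt _ (by omega))] at h0
    rw [hLlen] at h1
    rw [h1]
    rcases Nat.lt_or_ge (t+1) d with h2 | h2
    · rw [Nat.mod_eq_of_lt h2, Function.iterate_succ_apply']
    · have ht1 : t + 1 = d := by omega
      have e1 : f (f^[t] x) = x := by
        calc f (f^[t] x) = f^[t+1] x := (Function.iterate_succ_apply' f t x).symm
          _ = f^[d] x := by rw [ht1]
          _ = x := hperd
      rw [ht1, Nat.mod_self, Function.iterate_zero_apply, e1]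
  have hσnot : ∀ y, y ∉ L → σ y = y := fun y hy => List.formPerm_apply_of_notMem hy
  have hσedge : ∀ y ∈ L, r y (σ y) := by
    intro y hy
    obtain ⟨t, ht, rfl⟩ := (hmemL y).mp hy
    rw [hσmem _ hy]
    exact hfr _ (hiterPx t)
  have hxL : x ∈ L := (hmemL x).mpr ⟨0, hdpos, rfl⟩
  -- construct the improving mixed allocation
  have hchoice : ∀ j : Fin k, ∃ l : Fin k, ∀ i, A l i = A j (σ i) :=
    fun j => perm_alloc A hswap σ j
  choose lm hlm using hchoice
  set q : Fin k → ℝ := fun j' => ∑ j, if lm j = j' then p j else 0 with hq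
  have key : ∀ i : Fin n, ∑ j, q j * u i (A j i) = ∑ j, p j * u i (A j (σ i)) := by
    intro i
    have h3 : ∀ j' : Fin k, q j' * u i (A j' i)
        = ∑ j, if lm j = j' then p j * u i (A j' i) else 0 := by
      intro j'
      rw [hq, Finset.sum_mul]
      congr 1; funext j; split <;> simp
    rw [Finset.sum_congr rfl fun j' _ => h3 j', Finset.sum_comm]
    refine Finset.sum_congr rfl fun j _ => ?_
    rw [Finset.sum_ite_eq, if_pos (Finset.mem_univ _), hlm]
  apply hPE
  refine ⟨q, ?_, ?_, ?_, ?_⟩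
  · intro j'
    exact Finset.sum_nonneg fun j _ => by split <;> [exact hp0 j; exact le_refl 0]
  · rw [hq]
    rw [Finset.sum_comm]
    simp only [Finset.sum_ite_eq, Finset.mem_univ, if_true]
    exact hp1
  · intro i
    rw [key i]
    by_cases hi : i ∈ L
    · exact le_of_lt (hσedge i hi)
    · rw [hσnot i hi]
  · exact ⟨x, by rw [key x]; exact hσedge x hxL⟩
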